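/- Let F be a finite field with q elements, C ≤ F^Ω a code of dimension k ≥ 1 with generator matrix G ∈ Mat_{k,Ω}(F) (so C = {γG : γ ∈ F^k}), and let τ(i) denote the i-th column of G. Then C is a constant weight code with respect to ω if and only if there exists σ ∈ ℝ such that for every 1-dimensional subspace I of the column space F^k, Σ_{i ∈ χ(C), τ(i) ∈ I} ω(i) = σ. -/

import Mathlib

set_option maxHeartbeats 1000000


open scoped Classical
open Finset

/-- ω-weight of a vector β ∈ F^Ω. -/
noncomputable def wwt {F Ω : Type*} [Field F] [Fintype Ω] (ω : Ω → ℝ) (β : Ω → F) : ℝ :=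
  ∑ i ∈ univ.filter (fun i => β i ≠ 0), ω i

/-- ω-weight of a set A ⊆ F^Ω. -/
noncomputable def WWt {F Ω : Type*} [Field F] [Fintype Ω] (ω : Ω → ℝ) (A : Set (Ω → F)) : ℝ :=
  ∑ i ∈ univ.filter (fun i => ∃ β ∈ A, β i ≠ 0), ω i

section helpers
open Matrix Module
set_option linter.unusedSectionVars false

lemma card_filter_eq_nat_card {α : Type*} [Fintype α] (p : α → Prop) [dp : DecidablePred p] :
    (univ.filter p).card = Nat.card {x // p x} := by
  rw [Nat.card_eq_fintype_card, Fintype.card_subtype]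

variable {F : Type*} [Field F] [Fintype F] {k : ℕ}

noncomputable def dotL (v : Fin k → F) : (Fin k → F) →ₗ[F] F where
  toFun γ := γ ⬝ᵥ v
  map_add' x y := add_dotProduct x y v
  map_smul' c x := smul_dotProduct c x v

lemma dotL_apply (v γ : Fin k → F) : dotL v γ = γ ⬝ᵥ v := rfl

lemma dotL_surj {v : Fin k → F} (hv : v ≠ 0) : Function.Surjective (dotL v) := by
  obtain ⟨r, hr⟩ := Function.ne_iff.mp hv
  simp only [Pi.zero_apply] at hr
  intro c
  refine ⟨Pi.single r (c * (v r)⁻¹), ?_⟩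
  rw [dotL_apply, single_dotProduct]
  field_simp

lemma finrank_ker_dotL {v : Fin k → F} (hv : v ≠ 0) :
    1 + finrank F (LinearMap.ker (dotL v)) = k := by
  have h := (dotL v).finrank_range_add_finrank_ker
  rw [LinearMap.range_eq_top.mpr (dotL_surj hv), finrank_top, finrank_self,
    Module.finrank_fin_fun] at h
  exact h

lemma card_ker_lm {W : Type*} [AddCommGroup W] [Module F W] [Finite W]
    (f : W →ₗ[F] F) :
    Nat.card ↥(LinearMap.ker f) = Fintype.card F ^ finrank F (LinearMap.ker f) := by
  haveI : Fintype ↥(LinearMap.ker f) := Fintype.ofFinite _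
  rw [Nat.card_eq_fintype_card, card_eq_pow_finrank (K := F)]

lemma card_dot_eq_zero {v : Fin k → F} (hv : v ≠ 0)
    {dp : DecidablePred fun γ : Fin k → F => γ ⬝ᵥ v = 0} :
    (@Finset.filter _ _ dp univ).card = Fintype.card F ^ (k - 1) := by
  rw [card_filter_eq_nat_card]
  have h2 : Nat.card {γ : Fin k → F // γ ⬝ᵥ v = 0}
      = Nat.card ↥(LinearMap.ker (dotL v)) :=
    Nat.card_congr (Equiv.subtypeEquivRight (fun γ => by simp [LinearMap.mem_ker, dotL_apply]))
  rw [h2, card_ker_lm]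
  congr 1
  have := finrank_ker_dotL hv
  omega

lemma dot_span_lemma {v u : Fin k → F} (hv : v ≠ 0)
    (h : ∀ γ : Fin k → F, γ ⬝ᵥ v = 0 → γ ⬝ᵥ u = 0) : u ∈ Submodule.span F {v} := by
  obtain ⟨r, hr⟩ := Function.ne_iff.mp hv
  simp only [Pi.zero_apply] at hr
  refine Submodule.mem_span_singleton.mpr ⟨u r / v r, ?_⟩
  funext s
  have hγ : ((Pi.single s 1 : Fin k → F) - (v s / v r) • (Pi.single r 1 : Fin k → F)) ⬝ᵥ v = 0 := by
    rw [sub_dotProduct, smul_dotProduct, single_dotProduct, single_dotProduct]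
    field_simp
    rw [smul_eq_mul, div_mul_cancel₀ _ hr, sub_self]
  have h2 := h _ hγ
  rw [sub_dotProduct, smul_dotProduct, single_dotProduct, single_dotProduct] at h2
  simp only [one_mul, smul_eq_mul] at h2 ⊢
  have h3 : u s = v s / v r * u r := sub_eq_zero.mp h2
  rw [Pi.smul_apply, smul_eq_mul, h3]
  field_simp

lemma card_dot_dot {v u : Fin k → F} (hv : v ≠ 0) (hu : u ∉ Submodule.span F {v})
    {dp : DecidablePred fun γ : Fin k → F => γ ⬝ᵥ v = 0 ∧ γ ⬝ᵥ u = 0} :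
    (@Finset.filter _ _ dp univ).card = Fintype.card F ^ (k - 2) := by
  set K := LinearMap.ker (dotL v) with hK
  set g := (dotL u).domRestrict K with hg
  have hwit : ∃ γ : Fin k → F, γ ⬝ᵥ v = 0 ∧ γ ⬝ᵥ u ≠ 0 := by
    by_contra hcon
    push_neg at hcon
    exact hu (dot_span_lemma hv hcon)
  obtain ⟨γ₀, hγ₀v, hγ₀u⟩ := hwit
  have pf : γ₀ ∈ K := LinearMap.mem_ker.mpr hγ₀v
  have hgs : Function.Surjective g := by
    intro c
    have hval : g ⟨γ₀, pf⟩ = γ₀ ⬝ᵥ u := rfl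
    refine ⟨(c * (γ₀ ⬝ᵥ u)⁻¹) • ⟨γ₀, pf⟩, ?_⟩
    rw [_root_.map_smul, hval, smul_eq_mul]
    field_simp
  have hK1 : 1 + finrank F K = k := finrank_ker_dotL hv
  have hkerg : 1 + finrank F (LinearMap.ker g) = finrank F K := by
    have h := g.finrank_range_add_finrank_ker
    rwa [LinearMap.range_eq_top.mpr hgs, finrank_top, finrank_self] at h
  rw [card_filter_eq_nat_card]
  have h2 : Nat.card {γ : Fin k → F // γ ⬝ᵥ v = 0 ∧ γ ⬝ᵥ u = 0}
      = Nat.card ↥(LinearMap.ker g) := by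
    refine Nat.card_congr
      ⟨fun x => ⟨⟨x.1, ?_⟩, ?_⟩, fun x => ⟨x.1.1, ?_, ?_⟩, fun x => rfl, fun x => rfl⟩
    · simp [hK, LinearMap.mem_ker, dotL_apply, x.2.1]
    · simp [hg, LinearMap.mem_ker, dotL_apply, x.2.2]
    · exact x.1.2
    · exact x.2
  rw [h2, card_ker_lm]
  congr 1
  omega

lemma smul_inj {t : Fin k → F} (ht : t ≠ 0) : Function.Injective (fun d : F => d • t) := by
  intro a b hab
  have h : (a - b) • t = 0 := by
    rw [sub_smul, sub_eq_zero]; exact hab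
  rcases smul_eq_zero.mp h with h' | h'
  · exact sub_eq_zero.mp h'
  · exact absurd h' ht

lemma card_span_witness (γ t : Fin k → F)
    {dp : DecidablePred fun w : Fin k → F => (γ ⬝ᵥ w = 0 ∧ w ≠ 0) ∧
        (t ≠ 0 ∧ t ∈ Submodule.span F {w})} :
    (@Finset.filter _ _ dp univ).card
      = if t ≠ 0 ∧ γ ⬝ᵥ t = 0 then Fintype.card F - 1 else 0 := by
  have hdp : (@Finset.filter _ _ dp univ)
      = (univ.filter fun w : Fin k → F => (γ ⬝ᵥ w = 0 ∧ w ≠ 0) ∧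
        (t ≠ 0 ∧ t ∈ Submodule.span F {w})) := by
    ext w; simp only [Finset.mem_filter]
  rw [hdp]
  by_cases ht : t ≠ 0 ∧ γ ⬝ᵥ t = 0
  · rw [if_pos ht]
    obtain ⟨ht0, htγ⟩ := ht
    have hset : (univ.filter fun w : Fin k → F => (γ ⬝ᵥ w = 0 ∧ w ≠ 0) ∧
          (t ≠ 0 ∧ t ∈ Submodule.span F {w}))
        = (univ.filter fun d : F => d ≠ 0).image (fun d => d • t) := by
      ext w
      simp only [mem_filter, mem_univ, true_and, mem_image]
      constructor
      · rintro ⟨⟨hw0, hwne⟩, -, hts⟩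
        obtain ⟨c, hc⟩ := Submodule.mem_span_singleton.mp hts
        have hcne : c ≠ 0 := by
          rintro rfl
          rw [zero_smul] at hc
          exact ht0 hc.symm
        refine ⟨c⁻¹, inv_ne_zero hcne, ?_⟩
        rw [← hc, smul_smul, inv_mul_cancel₀ hcne, one_smul]
      · rintro ⟨d, hd, rfl⟩
        refine ⟨⟨?_, ?_⟩, ht0, ?_⟩
        · rw [dotProduct_smul, htγ, smul_zero]
        · simp only [ne_eq, smul_eq_zero, not_or]
          exact ⟨hd, ht0⟩
        · exact Submodule.mem_span_singleton.mpr
            ⟨d⁻¹, by rw [smul_smul, inv_mul_cancel₀ hd, one_smul]⟩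
    rw [hset, Finset.card_image_of_injective _ (smul_inj ht0),
      Finset.filter_ne' univ 0, Finset.card_erase_of_mem (mem_univ 0), Finset.card_univ]
  · rw [if_neg ht]
    rw [Finset.card_eq_zero, Finset.filter_eq_empty_iff]
    rintro w - ⟨⟨hw0, hwne⟩, ht0, hts⟩
    push_neg at ht
    have htγ : γ ⬝ᵥ t ≠ 0 := ht ht0
    obtain ⟨c, hc⟩ := Submodule.mem_span_singleton.mp hts
    exact htγ (by rw [← hc, dotProduct_smul, hw0, smul_zero])

lemma card_hyperplane_count {v : Fin k → F} (hv : v ≠ 0) (t : Fin k → F)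
    {dp : DecidablePred fun γ : Fin k → F => (γ ⬝ᵥ v = 0 ∧ γ ≠ 0) ∧ γ ⬝ᵥ t ≠ 0} :
    (@Finset.filter _ _ dp univ).card
      = if t ∈ Submodule.span F {v} then 0
        else Fintype.card F ^ (k - 1) - Fintype.card F ^ (k - 2) := by
  have hdp : (@Finset.filter _ _ dp univ)
      = (univ.filter fun γ : Fin k → F => (γ ⬝ᵥ v = 0 ∧ γ ≠ 0) ∧ γ ⬝ᵥ t ≠ 0) := by
    ext γ; simp only [Finset.mem_filter]
  rw [hdp]
  by_cases ht : t ∈ Submodule.span F {v}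
  · rw [if_pos ht, Finset.card_eq_zero, Finset.filter_eq_empty_iff]
    rintro γ - ⟨⟨hγv, -⟩, hγt⟩
    obtain ⟨c, hc⟩ := Submodule.mem_span_singleton.mp ht
    exact hγt (by rw [← hc, dotProduct_smul, hγv, smul_zero])
  · rw [if_neg ht]
    have hset : (univ.filter fun γ : Fin k → F => (γ ⬝ᵥ v = 0 ∧ γ ≠ 0) ∧ γ ⬝ᵥ t ≠ 0)
        = (univ.filter fun γ : Fin k → F => γ ⬝ᵥ v = 0)
          \ (univ.filter fun γ : Fin k → F => γ ⬝ᵥ v = 0 ∧ γ ⬝ᵥ t = 0) := by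
      ext γ
      simp only [mem_filter, mem_sdiff, mem_univ, true_and, not_and]
      constructor
      · rintro ⟨⟨h1, h2⟩, h3⟩
        exact ⟨h1, fun _ => h3⟩
      · rintro ⟨h1, h2⟩
        have h3 : γ ⬝ᵥ t ≠ 0 := h2 h1
        have h4 : γ ≠ 0 := by
          rintro rfl
          rw [zero_dotProduct] at h3
          exact h3 rfl
        exact ⟨⟨h1, h4⟩, h3⟩
    rw [hset, Finset.card_sdiff_of_subset (by
      intro γ hγ
      simp only [mem_filter, mem_univ, true_and] at hγ ⊢
      exact hγ.1), card_dot_eq_zero hv, card_dot_dot hv ht]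

end helpers

section main
open Matrix Module

open Matrix Module

lemma split_lemma {Ω : Type*} [Fintype Ω] (ω : Ω → ℝ) (R Q : Ω → Prop)
    [d1 : DecidablePred fun i => R i ∧ Q i] [d2 : DecidablePred fun i => ¬ Q i]
    [d3 : DecidablePred R] (hQ : ∀ i, ¬ Q i → R i) :
    (∑ i ∈ @Finset.filter _ _ d1 univ, ω i) + (∑ i ∈ @Finset.filter _ _ d2 univ, ω i)
      = ∑ i ∈ @Finset.filter _ _ d3 univ, ω i := by
  classical
  have e1 : @Finset.filter _ _ d1 univ = univ.filter (fun i => R i ∧ Q i) := by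
    ext i; simp only [Finset.mem_filter]
  have e2 : @Finset.filter _ _ d2 univ = univ.filter (fun i => ¬ Q i) := by
    ext i; simp only [Finset.mem_filter]
  have e3 : @Finset.filter _ _ d3 univ = univ.filter R := by
    ext i; simp only [Finset.mem_filter]
  rw [e1, e2, e3, ← Finset.sum_filter_add_sum_filter_not (univ.filter R) Q ω,
    Finset.filter_filter]
  congr 2
  · ext i
    simp only [Finset.mem_filter, Finset.mem_univ, true_and]
  · ext i
    simp only [Finset.mem_filter, Finset.mem_univ, true_and]
    exact ⟨fun h => ⟨hQ i h, h⟩, fun h => h.2⟩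

theorem stmt12 {F Ω : Type*} [Field F] [Fintype F] [Fintype Ω] [Nonempty Ω]
    (q : ℕ) (hq : Fintype.card F = q)
    (ω : Ω → ℝ) (hω : ∀ i, 0 < ω i)
    (k : ℕ) (hk1 : 1 ≤ k) (G : Matrix (Fin k) Ω F)
    (C : Submodule F (Ω → F)) (hdim : Module.finrank F C = k)
    (hG : (C : Set (Ω → F)) = Set.range (fun γ : Fin k → F => Matrix.vecMul γ G)) :
    (∀ α ∈ C, ∀ β ∈ C, α ≠ 0 → β ≠ 0 → wwt ω α = wwt ω β) ↔
      ∃ σ : ℝ, ∀ I : Submodule F (Fin k → F), Module.finrank F I = 1 →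
        (∑ i ∈ univ.filter
            (fun i => (∃ β ∈ C, β i ≠ 0) ∧ (fun r => G r i) ∈ I), ω i) = σ := by
  classical
  have hq2 : 2 ≤ q := by rw [← hq]; exact Fintype.one_lt_card
  have hq1R : (1:ℝ) < (q:ℝ) := by exact_mod_cast hq2
  set τ : Ω → (Fin k → F) := fun i r => G r i with hτdef
  have hvm : ∀ (γ : Fin k → F) (i : Ω), Matrix.vecMul γ G i = γ ⬝ᵥ τ i := fun γ i => rfl
  have hmem : ∀ α : Ω → F, α ∈ C ↔ ∃ γ : Fin k → F, Matrix.vecMul γ G = α := by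
    intro α
    constructor
    · intro h
      have h2 : α ∈ (C : Set (Ω → F)) := h
      rw [hG] at h2
      exact h2
    · rintro ⟨γ, rfl⟩
      have h2 : Matrix.vecMul γ G ∈ (C : Set (Ω → F)) := by rw [hG]; exact ⟨γ, rfl⟩
      exact h2
  have hinj : ∀ γ : Fin k → F, Matrix.vecMul γ G = 0 → γ = 0 := by
    have hrange : LinearMap.range (Matrix.vecMulLinear G) = C := by
      apply SetLike.coe_injective
      rw [LinearMap.coe_range, hG]
      rfl
    have hker : LinearMap.ker (Matrix.vecMulLinear G) = ⊥ := by
      have h := (Matrix.vecMulLinear G).finrank_range_add_finrank_ker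
      rw [hrange, hdim, Module.finrank_fin_fun] at h
      have h0 : finrank F ↥(LinearMap.ker (Matrix.vecMulLinear G)) = 0 := by omega
      exact Submodule.finrank_eq_zero.mp h0
    intro γ hγ
    have hm : γ ∈ LinearMap.ker (Matrix.vecMulLinear G) := by
      rw [LinearMap.mem_ker]
      exact hγ
    rw [hker, Submodule.mem_bot] at hm
    exact hm
  have hχ : ∀ i : Ω, (∃ β ∈ C, β i ≠ 0) ↔ τ i ≠ 0 := by
    intro i
    constructor
    · rintro ⟨β, hβC, hβi⟩ h0
      obtain ⟨γ, rfl⟩ := (hmem β).mp hβC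
      rw [hvm, h0, dotProduct_zero] at hβi
      exact hβi rfl
    · intro h0
      obtain ⟨r, hr⟩ := Function.ne_iff.mp h0
      simp only [Pi.zero_apply] at hr
      refine ⟨Matrix.vecMul (Pi.single r 1) G, (hmem _).mpr ⟨_, rfl⟩, ?_⟩
      rw [hvm, single_dotProduct, one_mul]
      exact hr
  set W : ℝ := ∑ i ∈ univ.filter (fun i => τ i ≠ 0), ω i with hW
  have hfilt : ∀ I : Submodule F (Fin k → F),
      (univ.filter fun i => (∃ β ∈ C, β i ≠ 0) ∧ (fun r => G r i) ∈ I)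
      = (univ.filter fun i => τ i ≠ 0 ∧ τ i ∈ I) := by
    intro I
    apply Finset.filter_congr
    intro i _
    exact and_congr_left' (hχ i)
  have hwwt : ∀ γ : Fin k → F, wwt ω (Matrix.vecMul γ G)
      = ∑ i ∈ univ.filter (fun i => γ ⬝ᵥ τ i ≠ 0), ω i := fun γ => rfl
  constructor
  · -- constant weight → σ exists
    intro hcw
    have hk0 : (0:ℕ) < k := hk1
    set γ₀ : Fin k → F := Pi.single ⟨0, hk0⟩ 1 with hγ₀
    have hγ₀ne : γ₀ ≠ 0 := by
      intro h
      have h2 := congrFun h ⟨0, hk0⟩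
      rw [hγ₀, Pi.single_eq_same, Pi.zero_apply] at h2
      exact one_ne_zero h2
    have hmemvm : ∀ γ : Fin k → F, Matrix.vecMul γ G ∈ C := fun γ => (hmem _).mpr ⟨γ, rfl⟩
    have hne : ∀ γ : Fin k → F, γ ≠ 0 → Matrix.vecMul γ G ≠ 0 := fun γ hγ h => hγ (hinj γ h)
    set w : ℝ := wwt ω (Matrix.vecMul γ₀ G) with hwdef
    have hwall : ∀ γ : Fin k → F, γ ≠ 0 → wwt ω (Matrix.vecMul γ G) = w :=
      fun γ hγ => hcw _ (hmemvm γ) _ (hmemvm γ₀) (hne γ hγ) (hne γ₀ hγ₀ne)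
    by_cases hk2 : 2 ≤ k
    · -- main case k ≥ 2
      set D : ℝ := (q:ℝ)^(k-1) - (q:ℝ)^(k-2) with hD
      have hqpos : (0:ℝ) < (q:ℝ) := by linarith
      have hDpos : 0 < D := by
        rw [hD]
        have he : k - 1 = (k-2) + 1 := by omega
        rw [he, pow_succ]
        have hp : (0:ℝ) < (q:ℝ)^(k-2) := pow_pos hqpos _
        nlinarith
      refine ⟨W - ((q:ℝ)^(k-1) - 1) * w / D, fun I hI => ?_⟩
      obtain ⟨v, hvne, hvall⟩ := finrank_eq_one_iff'.mp hI
      set v0 : Fin k → F := (v : Fin k → F) with hv0def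
      have hv0 : v0 ≠ 0 := fun h => hvne (Subtype.ext h)
      have hIspan : I = Submodule.span F {v0} := by
        apply le_antisymm
        · intro x hx
          obtain ⟨c, hc⟩ := hvall ⟨x, hx⟩
          have hcx : c • v0 = x := congrArg Subtype.val hc
          exact Submodule.mem_span_singleton.mpr ⟨c, hcx⟩
        · rw [Submodule.span_le, Set.singleton_subset_iff]
          exact v.2
      set B := univ.filter (fun γ : Fin k → F => γ ⬝ᵥ v0 = 0 ∧ γ ≠ 0) with hB
      have hcardB : (B.card : ℝ) = (q:ℝ)^(k-1) - 1 := by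
        have heq : B = (univ.filter fun γ : Fin k → F => γ ⬝ᵥ v0 = 0).erase 0 := by
          ext γ
          simp only [hB, mem_filter, mem_univ, true_and, Finset.mem_erase]
          tauto
        rw [heq, Finset.card_erase_of_mem (by simp [zero_dotProduct]),
          card_dot_eq_zero hv0, hq]
        have h1 : 1 ≤ q^(k-1) := Nat.one_le_pow _ _ (by omega)
        push_cast [Nat.cast_sub h1]
        ring
      have hsum1 : ∑ γ ∈ B, wwt ω (Matrix.vecMul γ G) = (B.card : ℝ) * w := by
        rw [Finset.sum_congr rfl (fun γ hγ => hwall γ ((mem_filter.mp hγ).2.2)),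
          Finset.sum_const, nsmul_eq_mul]
      have hsum2 : ∑ γ ∈ B, wwt ω (Matrix.vecMul γ G)
          = D * (W - ∑ i ∈ univ.filter
              (fun i => τ i ≠ 0 ∧ τ i ∈ Submodule.span F {v0}), ω i) := by
        have step1 : ∑ γ ∈ B, wwt ω (Matrix.vecMul γ G)
            = ∑ i : Ω, ∑ γ ∈ B, (if γ ⬝ᵥ τ i ≠ 0 then ω i else 0) := by
          rw [← Finset.sum_comm]
          refine Finset.sum_congr rfl fun γ _ => ?_
          rw [hwwt γ, Finset.sum_filter]
        have step2 : ∀ i : Ω, ∑ γ ∈ B, (if γ ⬝ᵥ τ i ≠ 0 then ω i else 0)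
            = (if τ i ∉ Submodule.span F {v0} then ω i * D else 0) := by
          intro i
          rw [← Finset.sum_filter, Finset.sum_const, nsmul_eq_mul]
          have hc : (B.filter (fun γ => γ ⬝ᵥ τ i ≠ 0)).card
              = if τ i ∈ Submodule.span F {v0} then 0
                else Fintype.card F ^ (k-1) - Fintype.card F ^ (k-2) := by
            rw [hB, Finset.filter_filter]
            exact card_hyperplane_count hv0 (τ i)
          rw [hc]
          by_cases hmem2 : τ i ∈ Submodule.span F {v0}
          · rw [if_pos hmem2, if_neg (by simpa using hmem2)]
            simp
          · rw [if_neg hmem2, if_pos hmem2, hq]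
            have h1 : q^(k-2) ≤ q^(k-1) := Nat.pow_le_pow_right (by omega) (by omega)
            push_cast [Nat.cast_sub h1]
            rw [hD]
            ring
        rw [step1, Finset.sum_congr rfl (fun i _ => step2 i), ← Finset.sum_filter,
          ← Finset.sum_mul]
        have hQ1 : ∀ i, ¬ (τ i ∈ Submodule.span F {v0}) → τ i ≠ 0 := by
          intro i hi h0
          exact hi (by rw [h0]; exact Submodule.zero_mem _)
        have hs := split_lemma ω (fun i => τ i ≠ 0)
          (fun i => τ i ∈ Submodule.span F {v0}) hQ1
        rw [← hW] at hs
        rw [mul_comm]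
        congr 1
        linarith
      have hkey : ((q:ℝ)^(k-1) - 1) * w
          = D * (W - ∑ i ∈ univ.filter
              (fun i => τ i ≠ 0 ∧ τ i ∈ Submodule.span F {v0}), ω i) := by
        rw [← hcardB, ← hsum1, hsum2]
      rw [hfilt I, hIspan]
      have hDne : D ≠ 0 := ne_of_gt hDpos
      field_simp
      linarith [hkey]
    · -- k = 1
      have hk1' : k = 1 := by omega
      refine ⟨W, fun I hI => ?_⟩
      have hIt : I = ⊤ :=
        Submodule.eq_top_of_finrank_eq (by rw [hI, Module.finrank_fin_fun, hk1'])
      rw [hfilt I, hIt, hW]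
      congr 1
      ext i
      simp [Submodule.mem_top]
  · -- σ exists → constant weight
    rintro ⟨σ, hσ⟩ α hα β hβ hα0 hβ0
    have key : ∀ γ : Fin k → F, γ ≠ 0 →
        ((q:ℝ)^(k-1) - 1) * σ = ((q:ℝ) - 1) * (W - wwt ω (Matrix.vecMul γ G)) := by
      intro γ hγ
      set A := univ.filter (fun u : Fin k → F => γ ⬝ᵥ u = 0 ∧ u ≠ 0) with hA
      have hcardA : (A.card : ℝ) = (q:ℝ)^(k-1) - 1 := by
        have heq : A = (univ.filter fun u : Fin k → F => u ⬝ᵥ γ = 0).erase 0 := by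
          ext u
          simp only [hA, mem_filter, mem_univ, true_and, Finset.mem_erase,
            dotProduct_comm γ u]
          tauto
        rw [heq, Finset.card_erase_of_mem (by simp [dotProduct_zero]),
          card_dot_eq_zero hγ, hq]
        have h1 : 1 ≤ q^(k-1) := Nat.one_le_pow _ _ (by omega)
        push_cast [Nat.cast_sub h1]
        ring
      have hsum1 : ∑ u ∈ A, (∑ i ∈ univ.filter
            (fun i => τ i ≠ 0 ∧ τ i ∈ Submodule.span F {u}), ω i) = (A.card : ℝ) * σ := by
        have hterm : ∀ u ∈ A, (∑ i ∈ univ.filter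
            (fun i => τ i ≠ 0 ∧ τ i ∈ Submodule.span F {u}), ω i) = σ := by
          intro u hu
          have hune : u ≠ 0 := (mem_filter.mp hu).2.2
          rw [← hfilt (Submodule.span F {u})]
          exact hσ _ (finrank_span_singleton hune)
        rw [Finset.sum_congr rfl hterm, Finset.sum_const, nsmul_eq_mul]
      have hsum2 : ∑ u ∈ A, (∑ i ∈ univ.filter
            (fun i => τ i ≠ 0 ∧ τ i ∈ Submodule.span F {u}), ω i)
          = ((q:ℝ) - 1) * (W - wwt ω (Matrix.vecMul γ G)) := by
        have step1 : ∑ u ∈ A, (∑ i ∈ univ.filter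
              (fun i => τ i ≠ 0 ∧ τ i ∈ Submodule.span F {u}), ω i)
            = ∑ i : Ω, ∑ u ∈ A, (if τ i ≠ 0 ∧ τ i ∈ Submodule.span F {u} then ω i else 0) := by
          rw [← Finset.sum_comm]
          refine Finset.sum_congr rfl fun u _ => ?_
          rw [Finset.sum_filter]
        have step2 : ∀ i : Ω, ∑ u ∈ A, (if τ i ≠ 0 ∧ τ i ∈ Submodule.span F {u} then ω i else 0)
            = (if τ i ≠ 0 ∧ γ ⬝ᵥ τ i = 0 then ω i * ((q:ℝ) - 1) else 0) := by
          intro i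
          rw [← Finset.sum_filter, Finset.sum_const, nsmul_eq_mul]
          have hc : (A.filter (fun u => τ i ≠ 0 ∧ τ i ∈ Submodule.span F {u})).card
              = if τ i ≠ 0 ∧ γ ⬝ᵥ τ i = 0 then Fintype.card F - 1 else 0 := by
            rw [hA, Finset.filter_filter]
            exact card_span_witness γ (τ i)
          rw [hc]
          by_cases hcond : τ i ≠ 0 ∧ γ ⬝ᵥ τ i = 0
          · rw [if_pos hcond, if_pos hcond, hq]
            push_cast [Nat.cast_sub (by omega : 1 ≤ q)]
            ring
          · rw [if_neg hcond, if_neg hcond]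
            simp
        rw [step1, Finset.sum_congr rfl (fun i _ => step2 i), ← Finset.sum_filter,
          ← Finset.sum_mul]
        have hQ2 : ∀ i, ¬ (γ ⬝ᵥ τ i = 0) → τ i ≠ 0 := by
          intro i hi h0
          exact hi (by rw [h0, dotProduct_zero])
        have hs := split_lemma ω (fun i => τ i ≠ 0)
          (fun i => γ ⬝ᵥ τ i = 0) hQ2
        rw [← hW] at hs
        have hwg : wwt ω (Matrix.vecMul γ G)
            = ∑ i ∈ univ.filter (fun i => ¬ γ ⬝ᵥ τ i = 0), ω i := hwwt γ
        rw [mul_comm]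
        congr 1
        linarith
      rw [← hcardA, ← hsum1, hsum2]
    obtain ⟨γa, rfl⟩ := (hmem α).mp hα
    obtain ⟨γb, rfl⟩ := (hmem β).mp hβ
    have hγa : γa ≠ 0 := by
      rintro rfl
      exact hα0 (Matrix.zero_vecMul G)
    have hγb : γb ≠ 0 := by
      rintro rfl
      exact hβ0 (Matrix.zero_vecMul G)
    have h1 := key γa hγa
    have h2 := key γb hγb
    have hqne : (q:ℝ) - 1 ≠ 0 := by linarith
    have h3 : ((q:ℝ) - 1) * (W - wwt ω (Matrix.vecMul γa G))
        = ((q:ℝ) - 1) * (W - wwt ω (Matrix.vecMul γb G)) := by linarith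
    have h4 := mul_left_cancel₀ hqne h3
    linarith

end main
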